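/- Let Ω ⊆ {1,...,n}² and D ∈ ℝ^{n×n}. The optimization problem min{‖L‖_* + ρ‖S‖₁ : π_Ω(L+S) = π_Ω(D)} has the same optimal value as min{‖L‖_* + ρ‖π_Ω(S)‖₁ : L + S = π_Ω(D)}; specifically, for every feasible pair of one problem there is a feasible pair of the other with objective value no larger. -/

import Mathlib

noncomputable def nuclearNorm {n : ℕ} (L : Matrix (Fin n) (Fin n) ℝ) : ℝ :=
  ∑ i, Real.sqrt ((show (Matrix.transpose L * L).IsHermitian by
    simpa [Matrix.conjTranspose_eq_transpose_of_trivial] using Matrix.isHermitian_conjTranspose_mul_self L).eigenvalues i)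

theorem stmt_19 (n : ℕ) (ρ : ℝ) (hρ : 0 < ρ)
    (Ω : Set ((Fin n) × (Fin n))) [DecidablePred (· ∈ Ω)]
    (D : Matrix (Fin n) (Fin n) ℝ)
    (proj : Matrix (Fin n) (Fin n) ℝ → Matrix (Fin n) (Fin n) ℝ)
    (hproj : ∀ Z i j, proj Z i j = if (i, j) ∈ Ω then Z i j else 0) :
    (∀ L S : Matrix (Fin n) (Fin n) ℝ, proj (L + S) = proj D →
      ∃ L' S' : Matrix (Fin n) (Fin n) ℝ, L' + S' = proj D ∧
        nuclearNorm L' + ρ * ∑ i, ∑ j, |proj S' i j| ≤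
          nuclearNorm L + ρ * ∑ i, ∑ j, |S i j|) ∧
    (∀ L' S' : Matrix (Fin n) (Fin n) ℝ, L' + S' = proj D →
      ∃ L S : Matrix (Fin n) (Fin n) ℝ, proj (L + S) = proj D ∧
        nuclearNorm L + ρ * ∑ i, ∑ j, |S i j| ≤
          nuclearNorm L' + ρ * ∑ i, ∑ j, |proj S' i j|) := by
  constructor
  · intro L S h
    refine ⟨L, proj D - L, by abel, ?_⟩
    have key : ∀ i j, |proj (proj D - L) i j| ≤ |S i j| := by
      intro i j
      rw [hproj]
      by_cases hm : (i, j) ∈ Ω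
      · have hij := congrFun (congrFun h i) j
        rw [hproj, hproj] at hij
        simp only [hm, if_true, Matrix.add_apply] at hij
        simp only [hm, if_true, Matrix.sub_apply, hproj]
        have : D i j - L i j = S i j := by linarith
        rw [this]
      · simp [hm, abs_nonneg]
    have hsum : ∑ i, ∑ j, |proj (proj D - L) i j| ≤ ∑ i, ∑ j, |S i j| :=
      Finset.sum_le_sum fun i _ => Finset.sum_le_sum fun j _ => key i j
    have := mul_le_mul_of_nonneg_left hsum hρ.le
    linarith
  · intro L' S' h
    refine ⟨L', proj S', ?_, le_refl _⟩
    have hh : ∀ i j, L' i j + S' i j = proj D i j := by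
      intro i j
      have := congrFun (congrFun h i) j
      simpa using this
    ext i j
    rw [hproj, hproj]
    by_cases hm : (i, j) ∈ Ω
    · simp only [hm, if_true, Matrix.add_apply, hproj]
      have := hh i j
      rw [hproj] at this
      simp only [hm, if_true] at this ⊢
      linarith
    · simp [hm]
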